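/- Let A be a linear endomorphism of a finite-dimensional vector space V over a field F whose minimal polynomial is p^r with p irreducible and separable. If there exists a subspace of V that is characteristic for A but not hyperinvariant for A, then p has degree 1 and F has exactly two elements (F = GF(2)). -/

import Mathlib

set_option maxHeartbeats 1000000

/-- A subspace `Y` is hyperinvariant for `A` if `g Y ⊆ Y` for every endomorphism `g`
commuting with `A`. -/
def HyperinvariantSubspace {F V : Type*} [Field F] [AddCommGroup V] [Module F V]
    (A : Module.End F V) (Y : Submodule F V) : Prop :=
  ∀ g : Module.End F V, Commute g A → ∀ x ∈ Y, g x ∈ Y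

/-- A subspace `Y` is characteristic for `A` if it is `A`-invariant and `g Y ⊆ Y` for every
invertible endomorphism `g` commuting with `A`. -/
def CharacteristicSubspace {F V : Type*} [Field F] [AddCommGroup V] [Module F V]
    (A : Module.End F V) (Y : Submodule F V) : Prop :=
  (∀ x ∈ Y, A x ∈ Y) ∧
    ∀ g : Module.End F V, IsUnit g → Commute g A → ∀ x ∈ Y, g x ∈ Y

open Polynomial in
/-- In a quotient of `R` by a maximal ideal, if some element of `R` kills a power of an
irreducible polynomial `p` with `2 ≤ deg p`, or if the base field has at least 3 elements,
then the residue field has two distinct nonzero elements. -/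
lemma aux_residue_three {F R : Type*} [Field F] [CommRing R] [Algebra F R]
    (p : Polynomial F) (hirr : Irreducible p)
    (hdeg : 2 ≤ p.natDegree ∨ ∃ c : F, c ≠ 0 ∧ c ≠ 1)
    (a : R) (r : ℕ) (hr : 0 < r) (ha : (Polynomial.aeval a) (p ^ r) = 0)
    (m : Ideal R) (hm : m.IsMaximal) :
    ∃ s t : R ⧸ m, s ≠ 0 ∧ t ≠ 0 ∧ s ≠ t := by
  haveI : Nontrivial (R ⧸ m) := Ideal.Quotient.nontrivial_iff.mpr hm.ne_top
  haveI : m.IsPrime := hm.isPrime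
  have hinj : Function.Injective (algebraMap F (R ⧸ m)) := (algebraMap F (R ⧸ m)).injective
  rcases hdeg with hdeg | ⟨c, hc0, hc1⟩
  · -- use the image of `a`
    have key : ∀ c : F, Ideal.Quotient.mk m a ≠ algebraMap F (R ⧸ m) c := by
      intro c hEq
      have h1 : (Polynomial.aeval (Ideal.Quotient.mk m a)) (p ^ r) = 0 := by
        have h2 := Polynomial.aeval_algHom_apply (Ideal.Quotient.mkₐ F m) a (p ^ r)
        rw [ha, map_zero] at h2
        rw [← Ideal.Quotient.mkₐ_eq_mk F m, h2]
      rw [map_pow] at h1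
      have h3 : (Polynomial.aeval (Ideal.Quotient.mk m a)) p = 0 :=
        pow_eq_zero_iff hr.ne' |>.mp h1
      rw [hEq, Polynomial.aeval_algebraMap_apply] at h3
      have hroot : p.eval c = 0 := by
        have : algebraMap F (R ⧸ m) (p.eval c) = algebraMap F (R ⧸ m) 0 := by
          simpa using h3
        simpa using hinj this
      have hdvd : (X - C c) ∣ p := (Polynomial.dvd_iff_isRoot).mpr hroot
      have hassoc := (Polynomial.irreducible_X_sub_C c).associated_of_dvd hirr hdvd
      have hdeg1 : p.natDegree = 1 := by
        have := Polynomial.degree_eq_degree_of_associated hassoc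
        rw [Polynomial.degree_X_sub_C] at this
        have := Polynomial.natDegree_eq_of_degree_eq_some this.symm
        exact this
      omega
    refine ⟨1, Ideal.Quotient.mk m a, one_ne_zero, ?_, ?_⟩
    · intro h; exact key 0 (by simpa using h)
    · intro h; exact key 1 (by simpa using h.symm)
  · refine ⟨1, algebraMap F (R ⧸ m) c, one_ne_zero, ?_, ?_⟩
    · intro h
      exact hc0 (hinj (by simpa using h))
    · intro h
      exact hc1 (hinj (by rw [map_one, ← h]))

/-- In a commutative artinian ring all of whose residue fields have two distinct
nonzero elements, every element is a sum of two units. -/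
lemma aux_sum_two_units {D : Type*} [CommRing D] [IsArtinianRing D]
    (h3 : ∀ m : Ideal D, m.IsMaximal → ∃ s t : D ⧸ m, s ≠ 0 ∧ t ≠ 0 ∧ s ≠ t)
    (g : D) : ∃ u v : D, IsUnit u ∧ IsUnit v ∧ g = u + v := by
  classical
  haveI hfin : Finite {I : Ideal D | I.IsMaximal} :=
    (IsArtinianRing.setOfPred_isMaximal_finite D).to_subtype
  have hsel : ∀ i : {I : Ideal D | I.IsMaximal},
      ∃ a : D ⧸ (i : Ideal D), a ≠ 0 ∧ a ≠ Ideal.Quotient.mk (i : Ideal D) g := by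
    intro i
    obtain ⟨s, t, hs, ht, hst⟩ := h3 i i.2
    by_cases h : Ideal.Quotient.mk (i : Ideal D) g = s
    · exact ⟨t, ht, fun e => hst (e.trans h).symm⟩
    · exact ⟨s, hs, fun e => h e.symm⟩
  choose a ha0 hag using hsel
  have hco : Pairwise (Function.onFun IsCoprime fun i : {I : Ideal D | I.IsMaximal} => (i : Ideal D)) :=
    fun i j hij => Ideal.isCoprime_iff_sup_eq.mpr <|
      i.2.coprime_of_ne j.2 (by rwa [Ne, Subtype.coe_inj])
  obtain ⟨u', hu'⟩ := Ideal.quotientInfToPiQuotient_surj hco a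
  obtain ⟨u, rfl⟩ := Ideal.Quotient.mk_surjective u'
  have hu : ∀ i : {I : Ideal D | I.IsMaximal}, Ideal.Quotient.mk (i : Ideal D) u = a i := by
    intro i
    have := congrFun hu' i
    rwa [Ideal.quotientInfToPiQuotient_mk'] at this
  have unit_of : ∀ w : D,
      (∀ i : {I : Ideal D | I.IsMaximal}, Ideal.Quotient.mk (i : Ideal D) w ≠ 0) → IsUnit w := by
    intro w hw
    by_contra hnw
    obtain ⟨M, hM, hle⟩ := Ideal.exists_le_maximal (Ideal.span {w})
      (by rwa [Ne, Ideal.span_singleton_eq_top])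
    exact hw ⟨M, hM⟩ (Ideal.Quotient.eq_zero_iff_mem.mpr (hle (Ideal.mem_span_singleton_self w)))
  refine ⟨u, g - u, unit_of u (fun i => by rw [hu i]; exact ha0 i),
    unit_of (g - u) (fun i => ?_), by ring⟩
  rw [map_sub, hu i, sub_ne_zero]
  exact fun e => hag i e.symm

/-- Every endomorphism commuting with `A` is a sum of two invertible endomorphisms commuting
with `A`, provided `deg p ≥ 2` or `|F| ≥ 3`. -/
lemma aux_sum_units_commuting {F V : Type*} [Field F] [AddCommGroup V] [Module F V]
    [FiniteDimensional F V]
    (A : Module.End F V) (p : Polynomial F) (r : ℕ) (hr : 0 < r)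
    (hirr : Irreducible p) (hmin : (Polynomial.aeval A) (p ^ r) = 0)
    (hdeg : 2 ≤ p.natDegree ∨ ∃ c : F, c ≠ 0 ∧ c ≠ 1)
    (g : Module.End F V) (hgA : Commute g A) :
    ∃ u v : Module.End F V, IsUnit u ∧ IsUnit v ∧ Commute u A ∧ Commute v A ∧ g = u + v := by
  set D := Algebra.adjoin F ({A, g} : Set (Module.End F V)) with hDdef
  letI : CommRing D := Algebra.adjoinCommRingOfComm F (by
    rintro x hx y hy
    simp only [Set.mem_insert_iff, Set.mem_singleton_iff] at hx hy
    rcases hx with rfl | rfl <;> rcases hy with rfl | rfl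
    · rfl
    · exact hgA.eq.symm
    · exact hgA.eq
    · rfl)
  haveI : IsArtinianRing D := IsArtinianRing.of_finite F D
  have hA : A ∈ D := Algebra.subset_adjoin (by simp)
  have hgD : g ∈ D := Algebra.subset_adjoin (by simp)
  have haeval : (Polynomial.aeval (⟨A, hA⟩ : D)) (p ^ r) = 0 := by
    apply Subtype.val_injective
    have h1 := Polynomial.aeval_algHom_apply D.val (⟨A, hA⟩ : D) (p ^ r)
    have h2 : D.val (⟨A, hA⟩ : D) = A := rfl
    rw [h2, hmin] at h1
    exact h1.symm
  have h3 : ∀ m : Ideal D, m.IsMaximal → ∃ s t : D ⧸ m, s ≠ 0 ∧ t ≠ 0 ∧ s ≠ t :=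
    fun m hm => aux_residue_three p hirr hdeg ⟨A, hA⟩ r hr haeval m hm
  obtain ⟨u, v, hu, hv, huv⟩ := aux_sum_two_units h3 ⟨g, hgD⟩
  have coe_unit : ∀ w : D, IsUnit w → IsUnit (w : Module.End F V) := by
    intro w hw
    rcases hw.exists_right_inv with ⟨w', hw'⟩
    refine isUnit_iff_exists.mpr ⟨(w' : Module.End F V), ?_, ?_⟩
    · have := congrArg (Subtype.val) hw'
      simpa using this
    · have := congrArg (Subtype.val) (mul_comm w' w ▸ hw')
      simpa using this
  have coe_comm : ∀ w : D, Commute (w : Module.End F V) A := by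
    intro w
    have h2 := congrArg (Subtype.val) (mul_comm w (⟨A, hA⟩ : D))
    have h3 : (w : Module.End F V) * A = A * w := by simpa using h2
    exact h3
  refine ⟨u, v, coe_unit u hu, coe_unit v hv, coe_comm u, coe_comm v, ?_⟩
  have := congrArg (Subtype.val) huv
  simpa using this

/-- If the minimal polynomial of `A` is `p ^ r` with `p` irreducible and
separable, and there is a characteristic subspace for `A` that is not hyperinvariant, then
`deg p = 1` and `F = GF(2)`. -/
theorem char_not_hyperinv_implies_deg_one_and_card_two
    {F V : Type*} [Field F] [AddCommGroup V] [Module F V] [FiniteDimensional F V]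
    (A : Module.End F V) (p : Polynomial F) (r : ℕ) (hr : 0 < r)
    (hirr : Irreducible p) (hsep : p.Separable)
    (hmin : minpoly F A = p ^ r)
    (Y : Submodule F V)
    (hchar : CharacteristicSubspace A Y) (hnhyp : ¬ HyperinvariantSubspace A Y) :
    p.natDegree = 1 ∧ Nat.card F = 2 := by
  by_contra hcon
  apply hnhyp
  have hdeg : 2 ≤ p.natDegree ∨ ∃ c : F, c ≠ 0 ∧ c ≠ 1 := by
    by_cases h1 : p.natDegree = 1
    · right
      by_contra hc
      push_neg at hc
      apply hcon
      refine ⟨h1, Nat.card_eq_two_iff.mpr ⟨0, 1, zero_ne_one, ?_⟩⟩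
      ext c
      simp only [Set.mem_insert_iff, Set.mem_singleton_iff, Set.mem_univ, iff_true]
      by_cases hc0 : c = 0
      · exact Or.inl hc0
      · exact Or.inr (hc c hc0)
    · left
      have := hirr.natDegree_pos
      omega
  intro g hgA x hx
  have haev : (Polynomial.aeval A) (p ^ r) = 0 := by
    rw [← hmin]; exact minpoly.aeval F A
  obtain ⟨u, v, hu, hv, huA, hvA, huv⟩ :=
    aux_sum_units_commuting A p r hr hirr haev hdeg g hgA
  have h1 : u x ∈ Y := hchar.2 u hu huA x hx
  have h2 : v x ∈ Y := hchar.2 v hv hvA x hx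
  rw [huv]
  exact Y.add_mem h1 h2
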